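/- Let G be a torsion-free nilpotent group with a generating set x_1,…,x_h such that every element of G is uniquely x_1^{ℓ_1}⋯x_h^{ℓ_h} with ℓ_i ∈ ℤ and [x_i,x_j] ∈ ⟨x_{j+1},…,x_h⟩ whenever i < j. Suppose H = {x_1^{q_1 ℓ_1}⋯x_h^{q_h ℓ_h} : ℓ_i ∈ ℤ} is a subgroup for some positive integers q_1,…,q_h. Then X = {x_1^{k_1}⋯x_h^{k_h} : 0 ≤ k_i < q_i} contains exactly one element from each coset of H in G; in particular [G:H] = q_1 q_2 ⋯ q_h. -/

import Mathlib

/-- Torsion-free monoid (Mathlib's former `Monoid.IsTorsionFree`, removed since). -/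
def Monoid.IsTorsionFree (G : Type*) [Monoid G] : Prop :=
  ∀ g : G, g ≠ 1 → ¬IsOfFinOrder g

open scoped commutatorElement

namespace MalcevAux

variable {G : Type*} [Group G]

def Q {n : ℕ} (f : Fin n → G) : ℕ → G
  | k => if hk : k < n then f ⟨k, hk⟩ * Q f (k + 1) else 1
termination_by k => n - k

lemma Q_of_lt {n : ℕ} (f : Fin n → G) {k : ℕ} (hk : k < n) :
    Q f k = f ⟨k, hk⟩ * Q f (k + 1) := by rw [Q, dif_pos hk]

lemma Q_of_ge {n : ℕ} (f : Fin n → G) {k : ℕ} (hk : n ≤ k) :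
    Q f k = 1 := by rw [Q, dif_neg (by omega)]

lemma Q_shift {n : ℕ} (f : Fin (n + 1) → G) : ∀ k, Q f (k + 1) = Q (fun i => f i.succ) k := by
  suffices H : ∀ d k, n - k ≤ d → Q f (k + 1) = Q (fun i => f i.succ) k by
    exact fun k => H (n - k) k le_rfl
  intro d
  induction d with
  | zero =>
    intro k hk
    rw [Q_of_ge f (by omega), Q_of_ge _ (by omega)]
  | succ d ih =>
    intro k hk
    by_cases hk' : k < n
    · rw [Q_of_lt f (show k + 1 < n + 1 by omega), Q_of_lt _ hk', ih (k + 1) (by omega)]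
      rfl
    · rw [Q_of_ge f (by omega), Q_of_ge _ (by omega)]

lemma ofFn_prod_eq_Q : ∀ {n : ℕ} (f : Fin n → G), (List.ofFn f).prod = Q f 0 := by
  intro n
  induction n with
  | zero => intro f; rw [Q_of_ge f le_rfl]; simp
  | succ n ih =>
    intro f
    rw [List.ofFn_succ, List.prod_cons, Q_of_lt f (Nat.succ_pos n), Q_shift, ← ih]
    rfl

lemma Q_congr {n : ℕ} {f f' : Fin n → G} :
    ∀ k, (∀ i : Fin n, k ≤ (i : ℕ) → f i = f' i) → Q f k = Q f' k := by
  suffices H : ∀ d k, n - k ≤ d → (∀ i : Fin n, k ≤ (i : ℕ) → f i = f' i) → Q f k = Q f' k by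
    exact fun k => H (n - k) k le_rfl
  intro d
  induction d with
  | zero => intro k hk _; rw [Q_of_ge f (by omega), Q_of_ge f' (by omega)]
  | succ d ih =>
    intro k hk hff
    by_cases hk' : k < n
    · rw [Q_of_lt f hk', Q_of_lt f' hk', hff ⟨k, hk'⟩ le_rfl,
        ih (k + 1) (by omega) (fun i hi => hff i (by omega))]
    · rw [Q_of_ge f (by omega), Q_of_ge f' (by omega)]

lemma Q_one {n : ℕ} : ∀ k, Q (fun _ : Fin n => (1 : G)) k = 1 := by
  suffices H : ∀ d k, n - k ≤ d → Q (fun _ : Fin n => (1 : G)) k = 1 by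
    exact fun k => H (n - k) k le_rfl
  intro d
  induction d with
  | zero => intro k hk; exact Q_of_ge _ (by omega)
  | succ d ih =>
    intro k hk
    by_cases hk' : k < n
    · rw [Q_of_lt _ hk', ih (k + 1) (by omega), one_mul]
    · exact Q_of_ge _ (by omega)

lemma Q_head_ones {n : ℕ} (f : Fin n → G) :
    ∀ k, (∀ i : Fin n, (i : ℕ) < k → f i = 1) → Q f 0 = Q f k := by
  intro k
  induction k with
  | zero => intro _; rfl
  | succ k ih =>
    intro hf
    rw [ih (fun i hi => hf i (by omega))]
    by_cases hk : k < n
    · rw [Q_of_lt f hk, hf ⟨k, hk⟩ (Nat.lt_succ_self k), one_mul]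
    · rw [Q_of_ge f (by omega), Q_of_ge f (by omega)]

lemma Q_mem {n : ℕ} (f : Fin n → G) (S : Subgroup G) :
    ∀ k, (∀ i : Fin n, k ≤ (i : ℕ) → f i ∈ S) → Q f k ∈ S := by
  suffices H : ∀ d k, n - k ≤ d → (∀ i : Fin n, k ≤ (i : ℕ) → f i ∈ S) → Q f k ∈ S by
    exact fun k => H (n - k) k le_rfl
  intro d
  induction d with
  | zero => intro k hk _; rw [Q_of_ge f (by omega)]; exact S.one_mem
  | succ d ih =>
    intro k hk hf
    by_cases hk' : k < n
    · rw [Q_of_lt f hk']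
      exact S.mul_mem (hf ⟨k, hk'⟩ le_rfl) (ih (k + 1) (by omega) (fun i hi => hf i (by omega)))
    · rw [Q_of_ge f (by omega)]; exact S.one_mem

end MalcevAux

namespace MalcevAux

section Main

variable {G : Type*} [Group G] {h : ℕ} (x : Fin h → G)

/-- tail subgroup generated by `x k`, `k ≥ j`. -/
def T (j : ℕ) : Subgroup G :=
  Subgroup.closure {g : G | ∃ k : Fin h, j ≤ (k : ℕ) ∧ g = x k}

lemma T_mono {j j' : ℕ} (hjj : j ≤ j') : T x j' ≤ T x j :=
  Subgroup.closure_mono (fun g ⟨k, hk, hg⟩ => ⟨k, le_trans hjj hk, hg⟩)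

lemma x_mem_T {j : ℕ} (k : Fin h) (hk : j ≤ (k : ℕ)) : x k ∈ T x j :=
  Subgroup.subset_closure ⟨k, hk, rfl⟩

lemma T_of_ge {j : ℕ} (hj : h ≤ j) : T x j = ⊥ := by
  rw [T, show {g : G | ∃ k : Fin h, j ≤ (k : ℕ) ∧ g = x k} = (∅ : Set G) from
    Set.eq_empty_iff_forall_notMem.2 (fun g ⟨k, hk, _⟩ => by have := k.isLt; omega),
    Subgroup.closure_empty]

lemma Q_pow_mem_T (ℓ : Fin h → ℤ) (j : ℕ) : Q (fun i => x i ^ ℓ i) j ∈ T x j :=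
  Q_mem _ _ j (fun i hi => Subgroup.zpow_mem _ (x_mem_T x i hi) _)

variable (htri : ∀ i j : Fin h, i < j →
      ⁅x i, x j⁆ ∈ Subgroup.closure {g : G | ∃ k : Fin h, j < k ∧ g = x k})

include htri in
lemma comm_mem (i k : Fin h) (hik : i < k) : ⁅x i, x k⁆ ∈ T x ((k : ℕ) + 1) := by
  refine Subgroup.closure_mono ?_ (htri i k hik)
  rintro g ⟨m, hm, hg⟩
  exact ⟨m, by exact_mod_cast hm, hg⟩

variable (hunique : ∀ g : G, ∃! ℓ : Fin h → ℤ,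
      g = (List.ofFn fun i => x i ^ ℓ i).prod)

include hunique in
lemma mem_T_zero (g : G) : g ∈ T x 0 := by
  obtain ⟨ℓ, hℓ, -⟩ := hunique g
  rw [hℓ, ofFn_prod_eq_Q]
  exact Q_pow_mem_T x ℓ 0

include htri hunique in
/-- normality of the tail subgroups -/
lemma T_normal : ∀ j : ℕ, ∀ g t : G, t ∈ T x j → g * t * g⁻¹ ∈ T x j := by
  suffices H : ∀ d j, h ≤ j + d → ∀ g t : G, t ∈ T x j → g * t * g⁻¹ ∈ T x j by
    exact fun j => H h j (by omega)
  intro d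
  induction d with
  | zero =>
    intro j hj g t ht
    rw [T_of_ge x (by omega)] at ht ⊢
    simp only [Subgroup.mem_bot] at ht ⊢
    simp [ht]
  | succ d ih =>
    intro j hj g t ht
    by_cases hjh : h ≤ j
    · rw [T_of_ge x hjh] at ht ⊢
      simp only [Subgroup.mem_bot] at ht ⊢
      simp [ht]
    -- the set of g's that conjugate T j into itself both ways is a subgroup containing all x i
    set K : Subgroup G :=
      { carrier := {g : G | ∀ t ∈ T x j, g * t * g⁻¹ ∈ T x j ∧ g⁻¹ * t * g ∈ T x j}
        one_mem' := by intro t ht; exact ⟨by simpa using ht, by simpa using ht⟩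
        mul_mem' := by
          intro a b ha hb t ht
          constructor
          · have := (ha (b * t * b⁻¹) (hb t ht).1).1
            group at this ⊢
            convert this using 2
          · have := (hb (a⁻¹ * t * a) (ha t ht).2).2
            group at this ⊢
            convert this using 2
        inv_mem' := by
          intro a ha t ht
          simp only [inv_inv]
          exact ⟨(ha t ht).2, (ha t ht).1⟩ } with hK
    have hxK : ∀ i : Fin h, x i ∈ K := by
      intro i
      show ∀ t ∈ T x j, x i * t * (x i)⁻¹ ∈ T x j ∧ (x i)⁻¹ * t * x i ∈ T x j
      intro t ht
      constructor
      · -- conj by x i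
        have : T x j ≤ Subgroup.comap ((MulAut.conj (x i)).toMonoidHom) (T x j) := by
          rw [T, Subgroup.closure_le]
          rintro g ⟨k, hk, rfl⟩
          simp only [Subgroup.coe_comap, Set.mem_preimage, SetLike.mem_coe,
            MulEquiv.coe_toMonoidHom, MulAut.conj_apply]
          by_cases hik : i < k
          · have hc : ⁅x i, x k⁆ ∈ T x j :=
              T_mono x (by omega) (comm_mem x htri i k hik)
            have : x i * x k * (x i)⁻¹ = ⁅x i, x k⁆ * x k := by group
            rw [this]
            exact Subgroup.mul_mem _ hc (x_mem_T x k hk)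
          · have hij : j ≤ (i : ℕ) := by
              have := k.isLt
              rcases lt_or_ge (i : ℕ) (k : ℕ) with hlt | hle
              · exact absurd (show i < k from hlt) hik
              · omega
            exact Subgroup.mul_mem _ (Subgroup.mul_mem _ (x_mem_T x i hij) (x_mem_T x k hk))
              (Subgroup.inv_mem _ (x_mem_T x i hij))
        simpa using this ht
      · -- conj by (x i)⁻¹
        have : T x j ≤ Subgroup.comap ((MulAut.conj (x i)⁻¹).toMonoidHom) (T x j) := by
          rw [T, Subgroup.closure_le]
          rintro g ⟨k, hk, rfl⟩
          simp only [Subgroup.coe_comap, Set.mem_preimage, SetLike.mem_coe,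
            MulEquiv.coe_toMonoidHom, MulAut.conj_apply, inv_inv]
          by_cases hik : i < k
          · have hc : ⁅x i, x k⁆ ∈ T x ((k : ℕ) + 1) := comm_mem x htri i k hik
            have hc2 : (x i)⁻¹ * ⁅x i, x k⁆⁻¹ * x i ∈ T x (j + 1) := by
              have h1 : (⁅x i, x k⁆)⁻¹ ∈ T x (j + 1) :=
                Subgroup.inv_mem _ (T_mono x (by omega) hc)
              have h2 := ih (j + 1) (by omega) (x i)⁻¹ _ h1
              rwa [inv_inv] at h2
            have key : (x i)⁻¹ * x k * x i = ((x i)⁻¹ * ⁅x i, x k⁆⁻¹ * x i) * x k := by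
              group
            rw [key]
            exact Subgroup.mul_mem _ (T_mono x (by omega) hc2) (x_mem_T x k hk)
          · have hij : j ≤ (i : ℕ) := by
              rcases lt_or_ge (i : ℕ) (k : ℕ) with hlt | hle
              · exact absurd (show i < k from hlt) hik
              · omega
            exact Subgroup.mul_mem _ (Subgroup.mul_mem _
              (Subgroup.inv_mem _ (x_mem_T x i hij)) (x_mem_T x k hk)) (x_mem_T x i hij)
        simpa using this ht
    have hgK : g ∈ K := by
      have hg0 : g ∈ T x 0 := mem_T_zero x hunique g
      have : T x 0 ≤ K := by
        rw [T, Subgroup.closure_le]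
        rintro g' ⟨k, -, rfl⟩
        exact hxK k
      exact this hg0
    exact (hgK t ht).1


include hunique in
lemma coord_eq {g : G} {ℓ ℓ' : Fin h → ℤ}
    (hℓ : g = Q (fun i => x i ^ ℓ i) 0) (hℓ' : g = Q (fun i => x i ^ ℓ' i) 0) : ℓ = ℓ' := by
  obtain ⟨m, -, hm⟩ := hunique g
  rw [hm ℓ (by show g = _; rw [ofFn_prod_eq_Q]; exact hℓ), hm ℓ' (by show g = _; rw [ofFn_prod_eq_Q]; exact hℓ')]

include hunique in
lemma coord_one {ℓ : Fin h → ℤ} (hℓ : (1 : G) = Q (fun i => x i ^ ℓ i) 0) : ℓ = 0 := by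
  refine coord_eq x hunique hℓ ?_
  rw [show (fun i : Fin h => x i ^ (0 : Fin h → ℤ) i) = fun _ : Fin h => (1 : G) by
    funext i; simp, Q_one]

/-- key structural computation: given that tail coords exist for `t ∈ T (j+1)`,
`x j ^ m * t` has coordinates `update (coords t) j m`. -/
lemma coord_cons {j : ℕ} (hj : j < h) (m : ℤ) {t : G} {s : Fin h → ℤ}
    (hs0 : ∀ i : Fin h, (i : ℕ) < j + 1 → s i = 0)
    (hts : t = Q (fun i => x i ^ s i) 0) :
    x ⟨j, hj⟩ ^ m * t = Q (fun i => x i ^ (Function.update s ⟨j, hj⟩ m) i) 0 := by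
  set jf : Fin h := ⟨j, hj⟩
  have h1 : t = Q (fun i => x i ^ s i) (j + 1) := by
    rw [hts, Q_head_ones _ (j + 1) (fun i hi => by rw [hs0 i hi]; simp)]
  have h2 : Q (fun i => x i ^ (Function.update s jf m) i) 0
      = Q (fun i => x i ^ (Function.update s jf m) i) j :=
    Q_head_ones _ j (fun i hi => by
      rw [Function.update_of_ne (by intro hij; rw [hij] at hi; exact lt_irrefl j hi) , hs0 i (by omega)]
      simp)
  have h3 : Q (fun i => x i ^ (Function.update s jf m) i) (j + 1)
      = Q (fun i => x i ^ s i) (j + 1) :=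
    Q_congr (j + 1) (fun i hi => by
      rw [Function.update_of_ne (by intro hij; rw [hij] at hi; exact lt_irrefl j hi)])
  rw [h2, Q_of_lt _ hj, h3, ← h1]
  congr 1
  rw [show (⟨j, hj⟩ : Fin h) = jf from rfl, Function.update_self]

include hunique in
lemma coord_xk (k : Fin h) :
    x k = Q (fun i => x i ^ (Function.update (0 : Fin h → ℤ) k 1) i) 0 := by
  rw [Q_head_ones _ (k : ℕ) (fun i hi => by
    rw [Function.update_of_ne (by intro hij; rw [hij] at hi; omega)]
    simp), Q_of_lt _ k.isLt]
  have : (⟨(k : ℕ), k.isLt⟩ : Fin h) = k := rfl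
  rw [this, Function.update_self, zpow_one]
  have : Q (fun i => x i ^ (Function.update (0 : Fin h → ℤ) k 1) i) ((k : ℕ) + 1)
      = Q (fun _ : Fin h => (1 : G)) ((k : ℕ) + 1) :=
    Q_congr _ (fun i hi => by
      rw [Function.update_of_ne (by intro hij; rw [hij] at hi; omega)]
      simp)
  rw [this, Q_one, mul_one]

include htri hunique in
/-- elements of `T j` have vanishing coordinates below `j` -/
lemma T_coords : ∀ j : ℕ, ∀ g ∈ T x j, ∃ ℓ : Fin h → ℤ,
    (∀ i : Fin h, (i : ℕ) < j → ℓ i = 0) ∧ g = Q (fun i => x i ^ ℓ i) 0 := by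
  suffices H : ∀ d j, h ≤ j + d → ∀ g ∈ T x j, ∃ ℓ : Fin h → ℤ,
      (∀ i : Fin h, (i : ℕ) < j → ℓ i = 0) ∧ g = Q (fun i => x i ^ ℓ i) 0 by
    exact fun j => H h j (by omega)
  intro d
  induction d with
  | zero =>
    intro j hj g hg
    rw [T_of_ge x (by omega), Subgroup.mem_bot] at hg
    exact ⟨0, fun i _ => rfl, by
      rw [hg, show (fun i : Fin h => x i ^ (0 : Fin h → ℤ) i) = fun _ : Fin h => (1 : G) by
        funext i; simp, Q_one]⟩
  | succ d ih =>
    intro j hj g hg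
    by_cases hjh : h ≤ j
    · rw [T_of_ge x hjh, Subgroup.mem_bot] at hg
      exact ⟨0, fun i _ => rfl, by
        rw [hg, show (fun i : Fin h => x i ^ (0 : Fin h → ℤ) i) = fun _ : Fin h => (1 : G) by
          funext i; simp, Q_one]⟩
    push_neg at hjh
    set jf : Fin h := ⟨j, hjh⟩ with hjf
    -- decomposition lemma: anything with coords vanishing below j splits as x_j^a * u, u ∈ T (j+1)
    have decomp : ∀ g' : G, ∀ ℓ : Fin h → ℤ, (∀ i : Fin h, (i : ℕ) < j → ℓ i = 0) →
        g' = Q (fun i => x i ^ ℓ i) 0 →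
        ∃ u ∈ T x (j + 1), g' = x jf ^ ℓ jf * u := by
      intro g' ℓ hℓ0 hℓ
      refine ⟨Q (fun i => x i ^ ℓ i) (j + 1), Q_pow_mem_T x ℓ (j + 1), ?_⟩
      rw [hℓ, Q_head_ones _ j (fun i hi => by rw [hℓ0 i hi]; simp), Q_of_lt _ hjh]
    -- the set of elements with vanishing coordinates below j is a subgroup
    set A : Subgroup G :=
      { carrier := {g' : G | ∃ ℓ : Fin h → ℤ,
          (∀ i : Fin h, (i : ℕ) < j → ℓ i = 0) ∧ g' = Q (fun i => x i ^ ℓ i) 0}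
        one_mem' := ⟨0, fun i _ => rfl, by
          rw [show (fun i : Fin h => x i ^ (0 : Fin h → ℤ) i) = fun _ : Fin h => (1 : G) by
            funext i; simp, Q_one]⟩
        mul_mem' := by
          rintro a b ⟨ℓa, hℓa0, hℓa⟩ ⟨ℓb, hℓb0, hℓb⟩
          obtain ⟨u, hu, hau⟩ := decomp a ℓa hℓa0 hℓa
          obtain ⟨u', hu', hbu⟩ := decomp b ℓb hℓb0 hℓb
          have hw : (x jf ^ ℓb jf)⁻¹ * u * x jf ^ ℓb jf * u' ∈ T x (j + 1) := by
            refine Subgroup.mul_mem _ ?_ hu'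
            have := T_normal x htri hunique (j + 1) (x jf ^ ℓb jf)⁻¹ u hu
            rwa [inv_inv] at this
          obtain ⟨s, hs0, hts⟩ := ih (j + 1) (by omega) _ hw
          refine ⟨Function.update s jf (ℓa jf + ℓb jf), fun i hi => ?_, ?_⟩
          · rw [Function.update_of_ne (by intro hij; rw [hij] at hi; exact lt_irrefl j hi)]
            exact hs0 i (by omega)
          · rw [← coord_cons x hjh _ hs0 hts, hau, hbu, ← hjf]
            group
        inv_mem' := by
          rintro a ⟨ℓa, hℓa0, hℓa⟩
          obtain ⟨u, hu, hau⟩ := decomp a ℓa hℓa0 hℓa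
          have hw : x jf ^ ℓa jf * u⁻¹ * (x jf ^ ℓa jf)⁻¹ ∈ T x (j + 1) :=
            T_normal x htri hunique (j + 1) _ u⁻¹ (Subgroup.inv_mem _ hu)
          obtain ⟨s, hs0, hts⟩ := ih (j + 1) (by omega) _ hw
          refine ⟨Function.update s jf (-ℓa jf), fun i hi => ?_, ?_⟩
          · rw [Function.update_of_ne (by intro hij; rw [hij] at hi; exact lt_irrefl j hi)]
            exact hs0 i (by omega)
          · rw [← coord_cons x hjh _ hs0 hts, hau, ← hjf]
            group } with hA
    have hTA : T x j ≤ A := by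
      rw [T, Subgroup.closure_le]
      rintro g' ⟨k, hk, rfl⟩
      show ∃ ℓ : Fin h → ℤ, (∀ i : Fin h, (i : ℕ) < j → ℓ i = 0)
        ∧ x k = Q (fun i => x i ^ ℓ i) 0
      exact ⟨Function.update (0 : Fin h → ℤ) k 1, fun i hi => by
        rw [Function.update_of_ne (by intro hij; rw [hij] at hi; omega)]; rfl,
        coord_xk x hunique k⟩
    exact hTA hg


variable (q : Fin h → ℤ) (hq : ∀ i, 0 < q i) (H : Subgroup G)
    (hH : (H : Set G) =
      {g : G | ∃ ℓ : Fin h → ℤ, g = (List.ofFn fun i => x i ^ (q i * ℓ i)).prod})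

include hH in
lemma mem_H_iff (g : G) : g ∈ H ↔ ∃ ℓ : Fin h → ℤ, g = Q (fun i => x i ^ (q i * ℓ i)) 0 := by
  rw [← SetLike.mem_coe, hH]
  constructor
  · rintro ⟨ℓ, hℓ⟩; exact ⟨ℓ, by rw [hℓ, ofFn_prod_eq_Q]⟩
  · rintro ⟨ℓ, hℓ⟩; exact ⟨ℓ, by rw [hℓ, ofFn_prod_eq_Q]⟩

include hq hH in
lemma xpow_mem_H (j : Fin h) (m : ℤ) : x j ^ (q j * m) ∈ H := by
  rw [mem_H_iff x q H hH]
  refine ⟨Function.update (0 : Fin h → ℤ) j m, ?_⟩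
  have key := coord_cons x j.isLt (q j * m) (t := (1 : G))
      (s := fun i => q i * (0 : Fin h → ℤ) i)
      (fun i _ => by simp)
      (by rw [show (fun i : Fin h => x i ^ (q i * (0 : Fin h → ℤ) i)) = fun _ : Fin h => (1 : G)
        by funext i; simp, Q_one])
  rw [mul_one] at key
  have : (⟨(j : ℕ), j.isLt⟩ : Fin h) = j := rfl
  rw [this] at key
  rw [key]
  apply Q_congr
  intro i _
  by_cases hij : i = j
  · subst hij; simp
  · rw [Function.update_of_ne hij, Function.update_of_ne hij]

include htri hunique hq hH in
lemma box_exists : ∀ j : ℕ, ∀ g ∈ T x j, ∃ v : Fin h → ℤ,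
    (∀ i, 0 ≤ v i ∧ v i < q i) ∧ (∀ i : Fin h, (i : ℕ) < j → v i = 0) ∧
    g⁻¹ * Q (fun i => x i ^ v i) 0 ∈ H := by
  suffices HH : ∀ d j, h ≤ j + d → ∀ g ∈ T x j, ∃ v : Fin h → ℤ,
      (∀ i, 0 ≤ v i ∧ v i < q i) ∧ (∀ i : Fin h, (i : ℕ) < j → v i = 0) ∧
      g⁻¹ * Q (fun i => x i ^ v i) 0 ∈ H by
    exact fun j => HH h j (by omega)
  have hbase : ∀ j, h ≤ j → ∀ g ∈ T x j, ∃ v : Fin h → ℤ,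
      (∀ i, 0 ≤ v i ∧ v i < q i) ∧ (∀ i : Fin h, (i : ℕ) < j → v i = 0) ∧
      g⁻¹ * Q (fun i => x i ^ v i) 0 ∈ H := by
    intro j hj g hg
    rw [T_of_ge x hj, Subgroup.mem_bot] at hg
    refine ⟨0, fun i => ⟨le_rfl, hq i⟩, fun i _ => rfl, ?_⟩
    rw [hg, show (fun i : Fin h => x i ^ (0 : Fin h → ℤ) i) = fun _ : Fin h => (1 : G) by
      funext i; simp, Q_one]
    simpa using H.one_mem
  intro d
  induction d with
  | zero => intro j hj; exact hbase j (by omega)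
  | succ d ih =>
    intro j hj g hg
    by_cases hjh : h ≤ j
    · exact hbase j hjh g hg
    push_neg at hjh
    set jf : Fin h := ⟨j, hjh⟩ with hjf
    obtain ⟨ℓ, hℓ0, hℓ⟩ := T_coords x htri hunique j g hg
    set a : ℤ := ℓ jf with ha
    set r : ℤ := a % q jf with hr
    set m : ℤ := a / q jf with hm
    have hdm : a = q jf * m + r := by rw [hm, hr]; exact (Int.mul_ediv_add_emod a (q jf)).symm
    have hu : g = x jf ^ a * Q (fun i => x i ^ ℓ i) (j + 1) := by
      rw [hℓ, Q_head_ones _ j (fun i hi => by rw [hℓ0 i hi]; simp), Q_of_lt _ hjh]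
    set u : G := Q (fun i => x i ^ ℓ i) (j + 1) with hudef
    have huT : u ∈ T x (j + 1) := Q_pow_mem_T x ℓ (j + 1)
    have hu1T : x jf ^ (q jf * m) * u * (x jf ^ (q jf * m))⁻¹ ∈ T x (j + 1) :=
      T_normal x htri hunique (j + 1) _ u huT
    obtain ⟨v', hv'box, hv'0, hv'H⟩ := ih (j + 1) (by omega) _ hu1T
    refine ⟨Function.update v' jf r, ?_, ?_, ?_⟩
    · intro i
      by_cases hij : i = jf
      · subst hij
        rw [Function.update_self]
        exact ⟨Int.emod_nonneg a (ne_of_gt (hq jf)), Int.emod_lt_of_pos a (hq jf)⟩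
      · rw [Function.update_of_ne hij]; exact hv'box i
    · intro i hi
      rw [Function.update_of_ne (by intro hij; rw [hij] at hi; exact lt_irrefl j hi)]
      exact hv'0 i (by omega)
    · -- g⁻¹ * P(update v' jf r) ∈ H
      have hPv : Q (fun i => x i ^ (Function.update v' jf r) i) 0
          = x jf ^ r * Q (fun i => x i ^ v' i) 0 :=
        (coord_cons x hjh r hv'0 rfl).symm
      rw [hPv]
      have hgdec : g = x jf ^ r * (x jf ^ (q jf * m) * u * (x jf ^ (q jf * m))⁻¹)
          * x jf ^ (q jf * m) := by
        rw [hu, hdm]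
        group
      set u1 : G := x jf ^ (q jf * m) * u * (x jf ^ (q jf * m))⁻¹ with hu1
      have : g⁻¹ * (x jf ^ r * Q (fun i => x i ^ v' i) 0)
          = (x jf ^ (q jf * m))⁻¹ * (u1⁻¹ * Q (fun i => x i ^ v' i) 0) := by
        rw [hgdec]; group
      rw [this]
      exact H.mul_mem (H.inv_mem (xpow_mem_H x q hq H hH jf m)) hv'H

include htri hunique hq hH in
lemma box_unique : ∀ j : ℕ, ∀ v v' : Fin h → ℤ,
    (∀ i, 0 ≤ v i ∧ v i < q i) → (∀ i, 0 ≤ v' i ∧ v' i < q i) →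
    (∀ i : Fin h, (i : ℕ) < j → v i = 0) → (∀ i : Fin h, (i : ℕ) < j → v' i = 0) →
    (Q (fun i => x i ^ v i) 0)⁻¹ * Q (fun i => x i ^ v' i) 0 ∈ H → v = v' := by
  suffices HH : ∀ d j, h ≤ j + d → ∀ v v' : Fin h → ℤ,
      (∀ i, 0 ≤ v i ∧ v i < q i) → (∀ i, 0 ≤ v' i ∧ v' i < q i) →
      (∀ i : Fin h, (i : ℕ) < j → v i = 0) → (∀ i : Fin h, (i : ℕ) < j → v' i = 0) →
      (Q (fun i => x i ^ v i) 0)⁻¹ * Q (fun i => x i ^ v' i) 0 ∈ H → v = v' by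
    exact fun j => HH h j (by omega)
  intro d
  induction d with
  | zero =>
    intro j hj v v' _ _ hv0 hv'0 _
    funext i
    rw [hv0 i (by omega), hv'0 i (by omega)]
  | succ d ih =>
    intro j hj v v' hvbox hv'box hv0 hv'0 hmem
    by_cases hjh : h ≤ j
    · funext i
      rw [hv0 i (by have := i.isLt; omega), hv'0 i (by have := i.isLt; omega)]
    push_neg at hjh
    set jf : Fin h := ⟨j, hjh⟩ with hjf
    set Pv : G := Q (fun i => x i ^ v i) 0 with hPv
    set Pv' : G := Q (fun i => x i ^ v' i) 0 with hPv'
    set z : G := Pv⁻¹ * Pv' with hz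
    -- z ∈ T j
    have hPvT : Pv ∈ T x j := by
      rw [hPv, Q_head_ones _ j (fun i hi => by rw [hv0 i hi]; simp)]
      exact Q_mem _ _ j (fun i hi => Subgroup.zpow_mem _ (x_mem_T x i hi) _)
    have hPv'T : Pv' ∈ T x j := by
      rw [hPv', Q_head_ones _ j (fun i hi => by rw [hv'0 i hi]; simp)]
      exact Q_mem _ _ j (fun i hi => Subgroup.zpow_mem _ (x_mem_T x i hi) _)
    have hzT : z ∈ T x j := Subgroup.mul_mem _ (Subgroup.inv_mem _ hPvT) hPv'T
    -- z = P(q * ℓ)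
    obtain ⟨ℓ, hzℓ⟩ := (mem_H_iff x q H hH z).1 hmem
    -- coordinates of z vanish below j
    obtain ⟨s, hs0, hzs⟩ := T_coords x htri hunique j z hzT
    have hsℓ : (fun i => q i * ℓ i) = s := coord_eq x hunique hzℓ hzs
    have hℓ0 : ∀ i : Fin h, (i : ℕ) < j → ℓ i = 0 := by
      intro i hi
      have : q i * ℓ i = 0 := by rw [show q i * ℓ i = s i from congrFun hsℓ i, hs0 i hi]
      rcases mul_eq_zero.1 this with hqi | hli
      · exact absurd hqi (ne_of_gt (hq i))
      · exact hli
    -- compute coordinate j of Pv' = Pv * z two ways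
    have hPvdec : Pv = x jf ^ v jf * Q (fun i => x i ^ v i) (j + 1) := by
      rw [hPv, Q_head_ones _ j (fun i hi => by rw [hv0 i hi]; simp), Q_of_lt _ hjh]
    have hzdec : z = x jf ^ (q jf * ℓ jf) * Q (fun i => x i ^ (q i * ℓ i)) (j + 1) := by
      rw [hzℓ, Q_head_ones _ j (fun i hi => by rw [hℓ0 i hi]; simp), Q_of_lt _ hjh]
    set t : G := Q (fun i => x i ^ v i) (j + 1) with ht
    set w : G := Q (fun i => x i ^ (q i * ℓ i)) (j + 1) with hw
    have htT : t ∈ T x (j + 1) := Q_pow_mem_T x v (j + 1)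
    have hwT : w ∈ T x (j + 1) := Q_pow_mem_T x (fun i => q i * ℓ i) (j + 1)
    have hinner : (x jf ^ (q jf * ℓ jf))⁻¹ * t * x jf ^ (q jf * ℓ jf) * w ∈ T x (j + 1) := by
      refine Subgroup.mul_mem _ ?_ hwT
      have := T_normal x htri hunique (j + 1) (x jf ^ (q jf * ℓ jf))⁻¹ t htT
      rwa [inv_inv] at this
    obtain ⟨s2, hs20, hs2⟩ := T_coords x htri hunique (j + 1) _ hinner
    have hPv'2 : Pv' = x jf ^ (v jf + q jf * ℓ jf)
        * Q (fun i => x i ^ s2 i) 0 := by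
      have : Pv' = Pv * z := by rw [hz]; group
      rw [this, hPvdec, hzdec, ← hs2]
      group
    have hcoord : v' = Function.update s2 jf (v jf + q jf * ℓ jf) := by
      refine coord_eq x hunique ?_ (coord_cons x hjh _ hs20 rfl)
      · rw [← hPv'2, hPv']
    have hvj : v' jf = v jf + q jf * ℓ jf := by
      rw [hcoord]; exact Function.update_self _ _ _
    -- bounds force ℓ jf = 0 and v jf = v' jf
    have hljf : ℓ jf = 0 := by
      have h1 := (hvbox jf).1
      have h2 := (hvbox jf).2
      have h3 := (hv'box jf).1
      have h4 := (hv'box jf).2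
      have hqj := hq jf
      rcases lt_trichotomy (ℓ jf) 0 with hl | hl | hl
      · nlinarith [hvj]
      · exact hl
      · nlinarith [hvj]
    have hvv : v jf = v' jf := by rw [hvj, hljf]; ring
    -- strip coordinate j and recurse
    set wv : Fin h → ℤ := Function.update v jf 0 with hwv
    set wv' : Fin h → ℤ := Function.update v' jf 0 with hwv'
    have hPwv : Q (fun i => x i ^ wv i) 0 = Q (fun i => x i ^ v i) (j + 1) := by
      rw [Q_head_ones (fun i => x i ^ wv i) (j + 1) (fun i hi => by
        have hz : wv i = 0 := by
          by_cases hij : i = jf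
          · subst hij; rw [hwv]; exact Function.update_self _ _ _
          · rw [hwv, Function.update_of_ne hij]
            exact hv0 i (by
              rcases Nat.lt_succ_iff_lt_or_eq.1 hi with h' | h'
              · exact h'
              · exact absurd (Fin.ext h' : i = jf) hij)
        simp [hz])]
      exact Q_congr _ (fun i hi => by
        have hz : wv i = v i := by
          rw [hwv]
          exact Function.update_of_ne (by intro hij; rw [hij] at hi; exact lt_irrefl j hi) _ _
        simp [hz])
    have hPwv' : Q (fun i => x i ^ wv' i) 0 = Q (fun i => x i ^ v' i) (j + 1) := by
      rw [Q_head_ones (fun i => x i ^ wv' i) (j + 1) (fun i hi => by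
        have hz : wv' i = 0 := by
          by_cases hij : i = jf
          · subst hij; rw [hwv']; exact Function.update_self _ _ _
          · rw [hwv', Function.update_of_ne hij]
            exact hv'0 i (by
              rcases Nat.lt_succ_iff_lt_or_eq.1 hi with h' | h'
              · exact h'
              · exact absurd (Fin.ext h' : i = jf) hij)
        simp [hz])]
      exact Q_congr _ (fun i hi => by
        have hz : wv' i = v' i := by
          rw [hwv']
          exact Function.update_of_ne (by intro hij; rw [hij] at hi; exact lt_irrefl j hi) _ _
        simp [hz])
    have hPv'dec : Pv' = x jf ^ v' jf * Q (fun i => x i ^ v' i) (j + 1) := by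
      rw [hPv', Q_head_ones _ j (fun i hi => by rw [hv'0 i hi]; simp), Q_of_lt _ hjh]
    have hrec : (Q (fun i => x i ^ wv i) 0)⁻¹ * Q (fun i => x i ^ wv' i) 0 ∈ H := by
      rw [hPwv, hPwv']
      have : (Q (fun i => x i ^ v i) (j+1))⁻¹ * Q (fun i => x i ^ v' i) (j+1)
          = Pv⁻¹ * Pv' := by
        rw [hPvdec, hPv'dec, ← hvv, ← ht]
        group
      rw [this]
      exact hmem
    have heq : wv = wv' := by
      refine ih (j + 1) (by omega) wv wv' ?_ ?_ ?_ ?_ hrec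
      · intro i
        by_cases hij : i = jf
        · subst hij; rw [hwv, Function.update_self]; exact ⟨le_rfl, hq _⟩
        · rw [hwv, Function.update_of_ne hij]; exact hvbox i
      · intro i
        by_cases hij : i = jf
        · subst hij; rw [hwv', Function.update_self]; exact ⟨le_rfl, hq _⟩
        · rw [hwv', Function.update_of_ne hij]; exact hv'box i
      · intro i hi
        by_cases hij : i = jf
        · subst hij; rw [hwv, Function.update_self]
        · rw [hwv, Function.update_of_ne hij]
          exact hv0 i (by
            rcases Nat.lt_succ_iff_lt_or_eq.1 hi with h' | h'
            · exact h'
            · exact absurd (Fin.ext h' : i = jf) hij)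
      · intro i hi
        by_cases hij : i = jf
        · subst hij; rw [hwv', Function.update_self]
        · rw [hwv', Function.update_of_ne hij]
          exact hv'0 i (by
            rcases Nat.lt_succ_iff_lt_or_eq.1 hi with h' | h'
            · exact h'
            · exact absurd (Fin.ext h' : i = jf) hij)
    funext i
    by_cases hij : i = jf
    · subst hij; exact hvv
    · have := congrFun heq i
      rwa [hwv, hwv', Function.update_of_ne hij, Function.update_of_ne hij] at this

end Main
end MalcevAux


open MalcevAux

/-- Mal'cev coordinates: in a torsion-free nilpotent group with a unique normal form
`g = x_1^{ℓ_1} ⋯ x_h^{ℓ_h}` and triangular commutation relations, if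
`H = {x_1^{q_1 ℓ_1} ⋯ x_h^{q_h ℓ_h}}` is a subgroup then the "box"
`{x_1^{k_1} ⋯ x_h^{k_h} : 0 ≤ k_i < q_i}` contains exactly one point of each coset of
`H`, and in particular `[G : H] = q_1 ⋯ q_h`. -/
theorem malcev_box_coset_representatives {G : Type*} [Group G]
    (hnil : Group.IsNilpotent G) (htf : Monoid.IsTorsionFree G)
    (h : ℕ) (x : Fin h → G)
    (hunique : ∀ g : G, ∃! ℓ : Fin h → ℤ,
      g = (List.ofFn fun i => x i ^ ℓ i).prod)
    (htri : ∀ i j : Fin h, i < j →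
      ⁅x i, x j⁆ ∈ Subgroup.closure {g : G | ∃ k : Fin h, j < k ∧ g = x k})
    (q : Fin h → ℤ) (hq : ∀ i, 0 < q i)
    (H : Subgroup G)
    (hH : (H : Set G) =
      {g : G | ∃ ℓ : Fin h → ℤ, g = (List.ofFn fun i => x i ^ (q i * ℓ i)).prod}) :
    (∀ g : G, ∃! v : Fin h → ℤ,
      (∀ i, 0 ≤ v i ∧ v i < q i) ∧
        g⁻¹ * (List.ofFn fun i => x i ^ v i).prod ∈ H) ∧
    H.index = (∏ i : Fin h, q i).toNat := by
  have main : ∀ g : G, ∃! v : Fin h → ℤ,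
      (∀ i, 0 ≤ v i ∧ v i < q i) ∧
        g⁻¹ * (List.ofFn fun i => x i ^ v i).prod ∈ H := by
    intro g
    obtain ⟨v, hvbox, -, hvH⟩ :=
      box_exists x htri hunique q hq H hH 0 g (mem_T_zero x hunique g)
    refine ⟨v, ⟨hvbox, by rw [ofFn_prod_eq_Q]; exact hvH⟩, ?_⟩
    rintro v' ⟨hv'box, hv'H⟩
    rw [ofFn_prod_eq_Q] at hv'H
    have hz : (Q (fun i => x i ^ v' i) 0)⁻¹ * Q (fun i => x i ^ v i) 0 ∈ H := by
      have := H.mul_mem (H.inv_mem hv'H) hvH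
      have heq : (g⁻¹ * Q (fun i => x i ^ v' i) 0)⁻¹ * (g⁻¹ * Q (fun i => x i ^ v i) 0)
          = (Q (fun i => x i ^ v' i) 0)⁻¹ * Q (fun i => x i ^ v i) 0 := by group
      rwa [heq] at this
    exact box_unique x htri hunique q hq H hH 0 v' v hv'box hvbox
      (fun i hi => absurd hi (by omega)) (fun i hi => absurd hi (by omega)) hz
  refine ⟨main, ?_⟩
  -- index computation
  have e : {v : Fin h → ℤ // ∀ i, 0 ≤ v i ∧ v i < q i} ≃ G ⧸ H := by
    refine Equiv.ofBijective
      (fun v => QuotientGroup.mk (Q (fun i => x i ^ v.1 i) 0)) ⟨?_, ?_⟩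
    · rintro ⟨v, hv⟩ ⟨v', hv'⟩ hvv
      have hmem : (Q (fun i => x i ^ v i) 0)⁻¹ * Q (fun i => x i ^ v' i) 0 ∈ H :=
        QuotientGroup.eq.1 hvv
      exact Subtype.ext (box_unique x htri hunique q hq H hH 0 v v' hv hv'
        (fun i hi => absurd hi (by omega)) (fun i hi => absurd hi (by omega)) hmem)
    · intro y
      refine QuotientGroup.induction_on y (fun g => ?_)
      obtain ⟨v, hvbox, -, hvH⟩ :=
        box_exists x htri hunique q hq H hH 0 g (mem_T_zero x hunique g)
      refine ⟨⟨v, hvbox⟩, ?_⟩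
      refine (QuotientGroup.eq).2 ?_
      have := H.inv_mem hvH
      have heq : (g⁻¹ * Q (fun i => x i ^ v i) 0)⁻¹
          = (Q (fun i => x i ^ v i) 0)⁻¹ * g := by group
      rwa [heq] at this
  have e2 : {v : Fin h → ℤ // ∀ i, 0 ≤ v i ∧ v i < q i}
      ≃ ∀ i : Fin h, {k : ℤ // 0 ≤ k ∧ k < q i} := Equiv.subtypePiEquivPi (p := fun i k => 0 ≤ k ∧ k < q i)
  have hcard : H.index = Nat.card {v : Fin h → ℤ // ∀ i, 0 ≤ v i ∧ v i < q i} := by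
    rw [Subgroup.index, ← Nat.card_congr e]
  rw [hcard, Nat.card_congr e2, Nat.card_pi]
  have hfac : ∀ i : Fin h, Nat.card {k : ℤ // 0 ≤ k ∧ k < q i} = (q i).toNat := by
    intro i
    have e3 : {k : ℤ // 0 ≤ k ∧ k < q i} ≃ (Finset.Ico (0 : ℤ) (q i) : Finset ℤ) :=
      Equiv.subtypeEquivRight (fun k => by simp [Finset.mem_Ico])
    rw [Nat.card_congr e3, Nat.card_eq_finsetCard, Int.card_Ico]
    simp
  rw [Finset.prod_congr rfl (fun i _ => hfac i)]
  have hprod : (∏ i : Fin h, q i) = ((∏ i : Fin h, (q i).toNat : ℕ) : ℤ) := by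
    rw [Nat.cast_prod]
    exact Finset.prod_congr rfl (fun i _ => (Int.toNat_of_nonneg (hq i).le).symm)
  rw [hprod, Int.toNat_natCast]
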